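/- arXiv:2105.04146 — 5 statements merged into one kernel-verified Lean document; each statement's English description precedes it below -/
import Mathlib

section
/- If M₁ and M₂ are maximal matchings of a simple graph G and G[M₁ △ M₂] contains an M₂-augmenting path component P = (v₁,…,v_ℓ) (both endpoints unmatched in M₂) with edges e_i = {v_i, v_{i+1}} and e₁, e₃ ∈ M₁, e₂ ∈ M₂, then M̂ = (M₁ \ {e₁, e₃}) ∪ {e₂} is a matching of G with |M̂| = |M₁| − 1 and |M̂ ∩ M₂| > |M₁ ∩ M₂|. -/
open SimpleGraph

variable {V : Type*}

def IsMatchingF (G : SimpleGraph V) (M : Finset (Sym2 V)) : Prop :=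
  (∀ e ∈ M, e ∈ G.edgeSet) ∧
    ∀ e ∈ M, ∀ f ∈ M, e ≠ f → ∀ v : V, v ∈ e → v ∉ f

def IsMaximalMatchingF [DecidableEq V] (G : SimpleGraph V) (M : Finset (Sym2 V)) : Prop :=
  IsMatchingF G M ∧ ∀ e ∈ G.edgeSet, e ∉ M → ¬ IsMatchingF G (insert e M)

/-- `v` is unmatched by the matching `M`. -/
def Unmatched (M : Finset (Sym2 V)) (v : V) : Prop := ∀ e ∈ M, v ∉ e

/-- The graph `G[M₁ △ M₂]` on the symmetric difference of two edge sets. -/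
def sdGraph [DecidableEq V] (M₁ M₂ : Finset (Sym2 V)) : SimpleGraph V where
  Adj v w := v ≠ w ∧ s(v, w) ∈ (M₁ \ M₂) ∪ (M₂ \ M₁)
  symm := by
    constructor
    intro v w h
    exact ⟨h.1.symm, by rw [Sym2.eq_swap]; exact h.2⟩
  loopless := ⟨fun v h => h.1 rfl⟩

/-- The walk `p` is a path which is exactly a connected component of `H`
(it spans the component and uses all of its edges, and has at least one edge). -/
def IsPathComponent [DecidableEq V] (H : SimpleGraph V) {u w : V} (p : H.Walk u w) : Prop :=
  p.IsPath ∧ 1 ≤ p.length ∧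
    (∀ x : V, x ∈ p.support ↔ H.connectedComponentMk x = H.connectedComponentMk u) ∧
    (∀ a b : V, H.Adj a b → a ∈ p.support → s(a, b) ∈ p.edges)

/-- The closed walk `p` is a cycle which is exactly a connected component of `H`. -/
def IsCycleComponent [DecidableEq V] (H : SimpleGraph V) {u : V} (p : H.Walk u u) : Prop :=
  p.IsCycle ∧
    (∀ x : V, x ∈ p.support ↔ H.connectedComponentMk x = H.connectedComponentMk u) ∧
    (∀ a b : V, H.Adj a b → a ∈ p.support → s(a, b) ∈ p.edges)

theorem stmt6 [DecidableEq V] (G : SimpleGraph V) (M₁ M₂ : Finset (Sym2 V))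
    (h₁ : IsMaximalMatchingF G M₁) (h₂ : IsMaximalMatchingF G M₂)
    (u w : V) (p : (sdGraph M₁ M₂).Walk u w)
    (hp : IsPathComponent (sdGraph M₁ M₂) p)
    (hu : Unmatched M₂ u) (hw : Unmatched M₂ w)
    (e₁ e₂ e₃ : Sym2 V)
    (he₁ : e₁ ∈ p.edges ∧ e₁ ∈ M₁ ∧ u ∈ e₁)
    (he₂ : e₂ ∈ p.edges ∧ e₂ ∈ M₂) (he₃ : e₃ ∈ p.edges ∧ e₃ ∈ M₁)
    (hne : e₁ ≠ e₃)
    (h12 : ∃ x : V, x ∈ e₁ ∧ x ∈ e₂) (h23 : ∃ x : V, x ∈ e₂ ∧ x ∈ e₃) :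
    IsMatchingF G (insert e₂ ((M₁.erase e₁).erase e₃)) ∧
      (insert e₂ ((M₁.erase e₁).erase e₃)).card = M₁.card - 1 ∧
      (M₁ ∩ M₂).card < ((insert e₂ ((M₁.erase e₁).erase e₃)) ∩ M₂).card := by
  obtain ⟨⟨hM₁sub, hM₁disj⟩, -⟩ := h₁
  obtain ⟨⟨hM₂sub, hM₂disj⟩, -⟩ := h₂
  have hedge : ∀ e ∈ p.edges, e ∈ (M₁ \ M₂) ∪ (M₂ \ M₁) := by
    intro e he
    have hE := p.edges_subset_edgeSet he
    induction e using Sym2.ind with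
    | _ a b => exact (by have hA : (sdGraph M₁ M₂).Adj a b := hE; exact hA.2)
  obtain ⟨he₁p, he₁M, hue₁⟩ := he₁
  obtain ⟨he₂p, he₂M⟩ := he₂
  obtain ⟨he₃p, he₃M⟩ := he₃
  have he₂M₁ : e₂ ∉ M₁ := by
    rcases Finset.mem_union.1 (hedge e₂ he₂p) with h | h
    · exact absurd he₂M (Finset.mem_sdiff.1 h).2
    · exact (Finset.mem_sdiff.1 h).2
  have he₁M₂ : e₁ ∉ M₂ := by
    rcases Finset.mem_union.1 (hedge e₁ he₁p) with h | h
    · exact (Finset.mem_sdiff.1 h).2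
    · exact absurd he₁M (Finset.mem_sdiff.1 h).2
  have he₃M₂ : e₃ ∉ M₂ := by
    rcases Finset.mem_union.1 (hedge e₃ he₃p) with h | h
    · exact (Finset.mem_sdiff.1 h).2
    · exact absurd he₃M (Finset.mem_sdiff.1 h).2
  obtain ⟨x, hxe₁, hxe₂⟩ := h12
  obtain ⟨y, hye₂, hye₃⟩ := h23
  have hxy : x ≠ y := by
    intro h; subst h
    exact hM₁disj e₁ he₁M e₃ he₃M hne x hxe₁ hye₃
  have he₂eq : e₂ = s(x, y) := (Sym2.mem_and_mem_iff hxy).1 ⟨hxe₂, hye₂⟩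
  have hvtx : ∀ v ∈ e₂, v = x ∨ v = y := by
    intro v hv
    rw [he₂eq] at hv
    exact Sym2.mem_iff.1 hv
  refine ⟨⟨?_, ?_⟩, ?_, ?_⟩
  · intro e he
    rcases Finset.mem_insert.1 he with rfl | he
    · exact hM₂sub e he₂M
    · exact hM₁sub e (Finset.mem_of_mem_erase (Finset.mem_of_mem_erase he))
  · have key : ∀ f, f ∈ (M₁.erase e₁).erase e₃ → ∀ v ∈ e₂, v ∉ f := by
      intro f hf v hv
      have hfM : f ∈ M₁ := Finset.mem_of_mem_erase (Finset.mem_of_mem_erase hf)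
      have hfe₃ : f ≠ e₃ := Finset.ne_of_mem_erase hf
      have hfe₁ : f ≠ e₁ := Finset.ne_of_mem_erase (Finset.mem_of_mem_erase hf)
      rcases hvtx v hv with rfl | rfl
      · exact hM₁disj e₁ he₁M f hfM hfe₁.symm v hxe₁
      · exact hM₁disj e₃ he₃M f hfM hfe₃.symm v hye₃
    intro e he f hf hef v hve
    rcases Finset.mem_insert.1 he with rfl | he' <;>
      rcases Finset.mem_insert.1 hf with rfl | hf'
    · exact absurd rfl hef
    · exact key f hf' v hve
    · intro hvf
      exact key e he' v hvf hve
    · exact hM₁disj e (Finset.mem_of_mem_erase (Finset.mem_of_mem_erase he'))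
        f (Finset.mem_of_mem_erase (Finset.mem_of_mem_erase hf')) hef v hve
  · have he₂notin : e₂ ∉ (M₁.erase e₁).erase e₃ := fun h =>
      he₂M₁ (Finset.mem_of_mem_erase (Finset.mem_of_mem_erase h))
    rw [Finset.card_insert_of_notMem he₂notin,
      Finset.card_erase_of_mem (Finset.mem_erase.2 ⟨hne.symm, he₃M⟩),
      Finset.card_erase_of_mem he₁M]
    have h2 : 2 ≤ M₁.card := Finset.one_lt_card.2 ⟨e₁, he₁M, e₃, he₃M, hne⟩
    omega
  · have heq : (insert e₂ ((M₁.erase e₁).erase e₃)) ∩ M₂ = insert e₂ (M₁ ∩ M₂) := by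
      ext e
      simp only [Finset.mem_inter, Finset.mem_insert, Finset.mem_erase]
      constructor
      · rintro ⟨rfl | ⟨h3, h1, hM⟩, hm2⟩
        · exact Or.inl rfl
        · exact Or.inr ⟨hM, hm2⟩
      · rintro (rfl | ⟨hM, hm2⟩)
        · exact ⟨Or.inl rfl, he₂M⟩
        · exact ⟨Or.inr ⟨fun h => he₃M₂ (h ▸ hm2), fun h => he₁M₂ (h ▸ hm2), hM⟩, hm2⟩
    rw [heq, Finset.card_insert_of_notMem (fun h => he₂M₁ (Finset.mem_inter.1 h).1)]
    omega
end

section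
/- Let φ be a 3-CNF formula and let G'_φ and O_φ be the graph and forbidden edge set constructed as follows: each variable x_i yields a path (x_i, x'_i, ¬x_i); each clause C_j with three literals yields a path (c_{j,1}, d_j, c_{j,2}, d'_j, c_{j,3}) (with two literals, a path (c_{j,1}, d_j, c_{j,2})); O_φ consists of the edges {literal-occurrence vertex, variable vertex} connecting clause gadgets to variable gadgets. Then φ is satisfiable if and only if G'_φ has a maximal matching M with M ∩ O_φ = ∅. -/
open SimpleGraph

variable {V : Type*}

/-- Vertex type for the SAT-reduction graph `G'_φ`: variable gadget vertices
`(i, 0) = x_i`, `(i, 1) = x'_i`, `(i, 2) = ¬x_i`, and clause gadget vertices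
`(j, 0) = c_{j,1}`, `(j, 1) = d_j`, `(j, 2) = c_{j,2}`, `(j, 3) = d'_j`, `(j, 4) = c_{j,3}`. -/
abbrev SatVertex (n m : ℕ) : Type := (Fin n × Fin 3) ⊕ (Fin m × Fin 5)

/-- Variable gadget edges: the path `(x_i, x'_i, ¬x_i)`. -/
def varEdges (n m : ℕ) : Set (Sym2 (SatVertex n m)) :=
  {e | ∃ i : Fin n,
    e = s(Sum.inl (i, 0), Sum.inl (i, 1)) ∨ e = s(Sum.inl (i, 1), Sum.inl (i, 2))}

/-- Clause gadget edges: the path `(c_{j,1}, d_j, c_{j,2}, d'_j, c_{j,3})` for a clause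
with three literals, and `(c_{j,1}, d_j, c_{j,2})` for a clause with two literals. -/
def clauseEdges {n m : ℕ} (φ : Fin m → List (Fin n × Bool)) : Set (Sym2 (SatVertex n m)) :=
  {e | ∃ (j : Fin m) (k : ℕ) (hk : k + 1 < 5),
    k < 2 * ((φ j).length - 1) ∧
    e = s(Sum.inr (j, ⟨k, by omega⟩), Sum.inr (j, ⟨k + 1, hk⟩))}

/-- The forbidden edges `O_φ`, connecting the `k`-th literal-occurrence vertex of
clause `j` to the vertex of the corresponding literal in the variable gadget. -/
def connEdges {n m : ℕ} (φ : Fin m → List (Fin n × Bool)) : Set (Sym2 (SatVertex n m)) :=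
  {e | ∃ (j : Fin m) (k : ℕ) (hk : 2 * k < 5) (hlen : k < (φ j).length),
    e = s(Sum.inr (j, ⟨2 * k, hk⟩),
          Sum.inl (((φ j).get ⟨k, hlen⟩).1,
            if ((φ j).get ⟨k, hlen⟩).2 then (0 : Fin 3) else 2))}

/-- The SAT-reduction graph `G'_φ`. -/
def satGraph {n m : ℕ} (φ : Fin m → List (Fin n × Bool)) : SimpleGraph (SatVertex n m) :=
  SimpleGraph.fromEdgeSet (varEdges n m ∪ clauseEdges φ ∪ connEdges φ)

lemma isMaximalMatchingF_iff {V : Type*} [DecidableEq V] (G : SimpleGraph V)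
    (M : Finset (Sym2 V)) :
    IsMaximalMatchingF G M ↔ IsMatchingF G M ∧
      ∀ e ∈ G.edgeSet, ∃ v, v ∈ e ∧ ∃ f ∈ M, v ∈ f := by
  constructor
  · rintro ⟨hm, hmax⟩
    refine ⟨hm, fun e he => ?_⟩
    by_cases heM : e ∈ M
    · induction e using Sym2.ind with
      | _ a b => exact ⟨a, Sym2.mem_mk_left a b, _, heM, Sym2.mem_mk_left a b⟩
    · by_contra hno
      push_neg at hno
      apply hmax e he heM
      constructor
      · intro e' he'
        rcases Finset.mem_insert.mp he' with rfl | h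
        · exact he
        · exact hm.1 e' h
      · intro e' he' f' hf' hne v hve
        rcases Finset.mem_insert.mp he' with rfl | he'M
        · rcases Finset.mem_insert.mp hf' with rfl | hf'M
          · exact absurd rfl hne
          · intro hvf; exact (hno v hve f' hf'M) hvf
        · rcases Finset.mem_insert.mp hf' with rfl | hf'M
          · intro hvf; exact (hno v hvf e' he'M) hve
          · exact hm.2 e' he'M f' hf'M hne v hve
  · rintro ⟨hm, hcov⟩
    refine ⟨hm, fun e he heM hins => ?_⟩
    obtain ⟨v, hv, f, hf, hvf⟩ := hcov e he
    exact hins.2 e (Finset.mem_insert_self e M) f (Finset.mem_insert_of_mem hf)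
      (fun h => heM (h ▸ hf)) v hv hvf

lemma mem_edgeSet_satGraph {n m : ℕ} (φ : Fin m → List (Fin n × Bool))
    (e : Sym2 (SatVertex n m)) :
    e ∈ (satGraph φ).edgeSet ↔ e ∈ varEdges n m ∪ clauseEdges φ ∪ connEdges φ := by
  rw [satGraph, edgeSet_fromEdgeSet, Set.mem_diff]
  refine ⟨fun h => h.1, fun h => ⟨h, ?_⟩⟩
  rcases h with (⟨i, rfl | rfl⟩ | ⟨j, k, hk, hlt, rfl⟩) | ⟨j, k, hk, hlen, rfl⟩ <;>
    simp [Sym2.mk_isDiag_iff, Fin.ext_iff] <;> omega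
def varE {n m : ℕ} (i : Fin n) (b : Bool) : Sym2 (SatVertex n m) :=
  if b then s(Sum.inl (i, 0), Sum.inl (i, 1)) else s(Sum.inl (i, 1), Sum.inl (i, 2))

def cE {n m : ℕ} (j : Fin m) (t : Fin 4) : Sym2 (SatVertex n m) :=
  s(Sum.inr (j, ⟨t.val, by have := t.2; omega⟩), Sum.inr (j, ⟨t.val + 1, by have := t.2; omega⟩))

def selP (k0 L t : ℕ) : Prop :=
  (t % 2 = 0 ∧ t / 2 < k0) ∨ (t % 2 = 1 ∧ k0 ≤ t / 2 ∧ t / 2 < L - 1)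

instance (k0 L t : ℕ) : Decidable (selP k0 L t) := by unfold selP; infer_instance

lemma mem_varE {n m : ℕ} {i : Fin n} {b : Bool} {v : SatVertex n m}
    (h : v ∈ varE i b) : ∃ c, v = Sum.inl (i, c) := by
  cases b <;> simp [varE, Sym2.mem_iff] at h <;> rcases h with rfl | rfl <;> exact ⟨_, rfl⟩

lemma mem_cE {n m : ℕ} {j : Fin m} {t : Fin 4} {v : SatVertex n m}
    (h : v ∈ cE j t) : ∃ c : Fin 5, v = Sum.inr (j, c) ∧ (c.val = t.val ∨ c.val = t.val + 1) := by
  simp [cE, Sym2.mem_iff] at h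
  rcases h with rfl | rfl
  · exact ⟨_, rfl, Or.inl rfl⟩
  · exact ⟨_, rfl, Or.inr rfl⟩
lemma forward {n m : ℕ} (φ : Fin m → List (Fin n × Bool))
    (hwf : ∀ j : Fin m, (φ j).length = 2 ∨ (φ j).length = 3)
    (a : Fin n → Bool) (hsat : ∀ j : Fin m, ∃ l ∈ φ j, a l.1 = l.2) :
    ∃ M : Finset (Sym2 (SatVertex n m)),
      IsMaximalMatchingF (satGraph φ) M ∧ ∀ e ∈ connEdges φ, e ∉ M := by
  classical
  have hkex : ∀ j, ∃ k : Fin (φ j).length, a ((φ j).get k).1 = ((φ j).get k).2 := by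
    intro j
    obtain ⟨l, hl, hal⟩ := hsat j
    obtain ⟨k, hkk⟩ := List.get_of_mem hl
    exact ⟨k, by rw [hkk]; exact hal⟩
  choose k0 hk0 using hkex
  have hL : ∀ j, 2 ≤ (φ j).length ∧ (φ j).length ≤ 3 := by
    intro j; rcases hwf j with h | h <;> omega
  set M : Finset (Sym2 (SatVertex n m)) :=
    (Finset.image (fun i => varE i (a i)) Finset.univ) ∪
      Finset.univ.biUnion (fun j =>
        Finset.image (fun t => cE j t)
          (Finset.univ.filter fun t : Fin 4 => selP (k0 j).val (φ j).length t.val)) with hMdef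
  have hMmem : ∀ e, e ∈ M ↔
      (∃ i, varE i (a i) = e) ∨
        ∃ j, ∃ t : Fin 4, selP (k0 j).val (φ j).length t.val ∧ cE j t = e := by
    intro e
    simp [hMdef]
  -- edges of M are in the graph
  have hMedge : ∀ e ∈ M, e ∈ (satGraph φ).edgeSet := by
    intro e he
    rw [mem_edgeSet_satGraph]
    rcases (hMmem e).mp he with ⟨i, rfl⟩ | ⟨j, t, hsel, rfl⟩
    · exact Or.inl (Or.inl ⟨i, by cases ha : a i <;> simp [varE, ha]⟩)
    · refine Or.inl (Or.inr ⟨j, t.val, by have := t.2; omega, ?_, rfl⟩)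
      have h1 := (hL j).1
      have h2 := (hL j).2
      have h3 := (k0 j).2
      rcases hsel with ⟨he0, hlt⟩ | ⟨ho, hge, hlt⟩ <;> omega
  -- disjointness
  have hdisj : ∀ e ∈ M, ∀ f ∈ M, e ≠ f → ∀ v, v ∈ e → v ∉ f := by
    intro e he f hf hne v hve hvf
    rcases (hMmem e).mp he with ⟨i, rfl⟩ | ⟨j, t, hsel, rfl⟩ <;>
      rcases (hMmem f).mp hf with ⟨i', rfl⟩ | ⟨j', t', hsel', rfl⟩
    · obtain ⟨c, rfl⟩ := mem_varE hve
      obtain ⟨c', hc⟩ := mem_varE hvf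
      obtain rfl : i = i' := by
        have := (Sum.inl.injEq _ _).mp hc
        exact congrArg Prod.fst this
      exact hne rfl
    · obtain ⟨c, rfl⟩ := mem_varE hve
      obtain ⟨c', hc, _⟩ := mem_cE hvf
      simp at hc
    · obtain ⟨c, rfl, _⟩ := mem_cE hve
      obtain ⟨c', hc⟩ := mem_varE hvf
      simp at hc
    · obtain ⟨c, rfl, hc1⟩ := mem_cE hve
      obtain ⟨c', hc', hc2⟩ := mem_cE hvf
      obtain ⟨rfl, rfl⟩ : j = j' ∧ c = c' := by
        have := (Sum.inr.injEq _ _).mp hc'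
        exact ⟨congrArg Prod.fst this, congrArg Prod.snd this⟩
      have htt : t = t' := by
        apply Fin.ext
        rcases hsel with ⟨he0, hlt⟩ | ⟨ho, hge, hlt⟩ <;>
          rcases hsel' with ⟨he0', hlt'⟩ | ⟨ho', hge', hlt'⟩ <;> omega
      exact hne (htt ▸ rfl)
  -- coverage facts
  have cov_var1 : ∀ i : Fin n, ∃ f ∈ M, (Sum.inl (i, 1) : SatVertex n m) ∈ f := by
    intro i
    refine ⟨varE i (a i), (hMmem _).mpr (Or.inl ⟨i, rfl⟩), ?_⟩
    cases ha : a i <;> simp [varE, ha]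
  have cov_odd : ∀ (j : Fin m) (p : ℕ) (h5 : 2 * p + 1 < 5), p < (φ j).length - 1 →
      ∃ f ∈ M, (Sum.inr (j, ⟨2 * p + 1, h5⟩) : SatVertex n m) ∈ f := by
    intro j p h5 hp
    by_cases hpk : p < (k0 j).val
    · have hsel : selP (k0 j).val (φ j).length (2 * p) := Or.inl ⟨by omega, by omega⟩
      refine ⟨cE j ⟨2 * p, by omega⟩, (hMmem _).mpr (Or.inr ⟨j, _, hsel, rfl⟩), ?_⟩
      simp [cE, Sym2.mem_iff]
    · have hsel : selP (k0 j).val (φ j).length (2 * p + 1) := Or.inr ⟨by omega, by omega, by omega⟩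
      refine ⟨cE j ⟨2 * p + 1, by omega⟩, (hMmem _).mpr (Or.inr ⟨j, _, hsel, rfl⟩), ?_⟩
      simp [cE, Sym2.mem_iff]
  have cov_even : ∀ (j : Fin m) (k : ℕ) (h5 : 2 * k < 5), k < (φ j).length → k ≠ (k0 j).val →
      ∃ f ∈ M, (Sum.inr (j, ⟨2 * k, h5⟩) : SatVertex n m) ∈ f := by
    intro j k h5 hk hne
    have h2 := (hL j).2
    have h3 := (k0 j).2
    by_cases hkk : k < (k0 j).val
    · have hsel : selP (k0 j).val ((φ j).length) (2 * k) := Or.inl ⟨by omega, by omega⟩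
      refine ⟨cE j ⟨2 * k, by omega⟩, (hMmem _).mpr (Or.inr ⟨j, _, hsel, rfl⟩), ?_⟩
      simp [cE, Sym2.mem_iff]
    · have hsel : selP (k0 j).val ((φ j).length) (2 * k - 1) := Or.inr ⟨by omega, by omega, by omega⟩
      refine ⟨cE j ⟨2 * k - 1, by omega⟩, (hMmem _).mpr (Or.inr ⟨j, _, hsel, rfl⟩), ?_⟩
      simp only [cE, Sym2.mem_iff, Sum.inr.injEq, Prod.mk.injEq, Fin.mk.injEq]
      right
      exact ⟨by trivial, by omega⟩
  refine ⟨M, (isMaximalMatchingF_iff _ _).mpr ⟨⟨hMedge, hdisj⟩, ?_⟩, ?_⟩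
  · -- maximality via coverage
    intro e he
    rw [mem_edgeSet_satGraph] at he
    rcases he with (⟨i, rfl | rfl⟩ | ⟨j, t, h5, hlt, rfl⟩) | ⟨j, k, h5, hlen, rfl⟩
    · obtain ⟨f, hf, hvf⟩ := cov_var1 i
      exact ⟨Sum.inl (i, 1), by simp [Sym2.mem_iff], f, hf, hvf⟩
    · obtain ⟨f, hf, hvf⟩ := cov_var1 i
      exact ⟨Sum.inl (i, 1), by simp [Sym2.mem_iff], f, hf, hvf⟩
    · by_cases ht : t % 2 = 1
      · obtain ⟨f, hf, hvf⟩ := cov_odd j (t / 2) (by omega) (by omega)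
        refine ⟨Sum.inr (j, ⟨2 * (t / 2) + 1, by omega⟩), ?_, f, hf, hvf⟩
        simp only [Sym2.mem_iff, Sum.inr.injEq, Prod.mk.injEq, Fin.mk.injEq]
        left
        exact ⟨by trivial, by omega⟩
      · obtain ⟨f, hf, hvf⟩ := cov_odd j (t / 2) (by omega) (by omega)
        refine ⟨Sum.inr (j, ⟨2 * (t / 2) + 1, by omega⟩), ?_, f, hf, hvf⟩
        simp only [Sym2.mem_iff, Sum.inr.injEq, Prod.mk.injEq, Fin.mk.injEq]
        right
        exact ⟨by trivial, by omega⟩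
    · by_cases hke : k = (k0 j).val
      · have hkk : (⟨k, hlen⟩ : Fin (φ j).length) = k0 j := Fin.ext hke
        rw [hkk]
        have hsat0 := hk0 j
        cases hb : ((φ j).get (k0 j)).2
        · rw [hb] at hsat0
          simp only [List.get_eq_getElem] at hsat0
          refine ⟨Sum.inl (((φ j).get (k0 j)).1, 2), by simp [hb, Sym2.mem_iff],
            varE (((φ j).get (k0 j)).1) (a (((φ j).get (k0 j)).1)),
            (hMmem _).mpr (Or.inl ⟨_, rfl⟩), ?_⟩
          simp [varE, hsat0, Sym2.mem_iff]

        · rw [hb] at hsat0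
          simp only [List.get_eq_getElem] at hsat0
          refine ⟨Sum.inl (((φ j).get (k0 j)).1, 0), by simp [hb, Sym2.mem_iff],
            varE (((φ j).get (k0 j)).1) (a (((φ j).get (k0 j)).1)),
            (hMmem _).mpr (Or.inl ⟨_, rfl⟩), ?_⟩
          simp [varE, hsat0, Sym2.mem_iff]

      · obtain ⟨f, hf, hvf⟩ := cov_even j k h5 hlen hke
        exact ⟨Sum.inr (j, ⟨2 * k, h5⟩), by simp [Sym2.mem_iff], f, hf, hvf⟩
  · -- M avoids connEdges
    rintro e ⟨j, k, h5, hlen, rfl⟩ heM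
    rcases (hMmem _).mp heM with ⟨i, hE⟩ | ⟨j', t, hsel, hE⟩
    · cases ha : a i <;> simp [varE, ha, Sym2.eq_iff] at hE
    · simp [cE, Sym2.eq_iff] at hE
lemma inc_inl0 {n m : ℕ} {φ : Fin m → List (Fin n × Bool)} {f : Sym2 (SatVertex n m)}
    (hf : f ∈ (satGraph φ).edgeSet) (hc : f ∉ connEdges φ) {i : Fin n}
    (hv : (Sum.inl (i, (0 : Fin 3)) : SatVertex n m) ∈ f) :
    f = s(Sum.inl (i, 0), Sum.inl (i, 1)) := by
  rw [mem_edgeSet_satGraph] at hf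
  rcases hf with (⟨i', h | h⟩ | ⟨j, k, hk, hlt, rfl⟩) | h
  · subst h
    simp only [Sym2.mem_iff, Sum.inl.injEq, Prod.mk.injEq] at hv
    rcases hv with ⟨rfl, -⟩ | ⟨-, h01⟩
    · rfl
    · exact absurd h01 (by decide)
  · subst h
    simp only [Sym2.mem_iff, Sum.inl.injEq, Prod.mk.injEq] at hv
    rcases hv with ⟨-, h01⟩ | ⟨-, h01⟩ <;> exact absurd h01 (by decide)
  · simp [Sym2.mem_iff] at hv
  · exact absurd h hc

lemma inc_inl2 {n m : ℕ} {φ : Fin m → List (Fin n × Bool)} {f : Sym2 (SatVertex n m)}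
    (hf : f ∈ (satGraph φ).edgeSet) (hc : f ∉ connEdges φ) {i : Fin n}
    (hv : (Sum.inl (i, (2 : Fin 3)) : SatVertex n m) ∈ f) :
    f = s(Sum.inl (i, 1), Sum.inl (i, 2)) := by
  rw [mem_edgeSet_satGraph] at hf
  rcases hf with (⟨i', h | h⟩ | ⟨j, k, hk, hlt, rfl⟩) | h
  · subst h
    simp only [Sym2.mem_iff, Sum.inl.injEq, Prod.mk.injEq] at hv
    rcases hv with ⟨-, h01⟩ | ⟨-, h01⟩ <;> exact absurd h01 (by decide)
  · subst h
    simp only [Sym2.mem_iff, Sum.inl.injEq, Prod.mk.injEq] at hv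
    rcases hv with ⟨-, h01⟩ | ⟨rfl, -⟩
    · exact absurd h01 (by decide)
    · rfl
  · simp [Sym2.mem_iff] at hv
  · exact absurd h hc

lemma inc_inr' {n m : ℕ} {φ : Fin m → List (Fin n × Bool)} {f : Sym2 (SatVertex n m)}
    (hf : f ∈ (satGraph φ).edgeSet) (hc : f ∉ connEdges φ) {j : Fin m} {c : Fin 5}
    (hv : (Sum.inr (j, c) : SatVertex n m) ∈ f) :
    ∃ (t : ℕ) (ht : t + 1 < 5), t < 2 * ((φ j).length - 1) ∧
      f = s(Sum.inr (j, ⟨t, by omega⟩), Sum.inr (j, ⟨t + 1, ht⟩)) ∧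
      (c.val = t ∨ c.val = t + 1) := by
  rw [mem_edgeSet_satGraph] at hf
  rcases hf with (⟨i', h | h⟩ | ⟨j', k, hk, hlt, rfl⟩) | h
  · subst h; simp [Sym2.mem_iff] at hv
  · subst h; simp [Sym2.mem_iff] at hv
  · simp only [Sym2.mem_iff, Sum.inr.injEq, Prod.mk.injEq] at hv
    rcases hv with ⟨rfl, hcv⟩ | ⟨rfl, hcv⟩
    · exact ⟨k, hk, hlt, rfl, Or.inl (by rw [hcv])⟩
    · exact ⟨k, hk, hlt, rfl, Or.inr (by rw [hcv])⟩
  · exact absurd h hc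
lemma clauseEdge_eq {n m : ℕ} {j : Fin m} {t t' : ℕ} {h1 : t + 1 < 5} {h2 : t' + 1 < 5}
    (h : (s(Sum.inr (j, ⟨t, by omega⟩), Sum.inr (j, ⟨t + 1, h1⟩)) : Sym2 (SatVertex n m)) =
      s(Sum.inr (j, ⟨t', by omega⟩), Sum.inr (j, ⟨t' + 1, h2⟩))) : t = t' := by
  rw [Sym2.eq_iff] at h
  simp only [Sum.inr.injEq, Prod.mk.injEq, Fin.mk.injEq] at h
  omega

lemma backward {n m : ℕ} (φ : Fin m → List (Fin n × Bool))
    (hwf : ∀ j : Fin m, (φ j).length = 2 ∨ (φ j).length = 3)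
    (M : Finset (Sym2 (SatVertex n m)))
    (hmax : IsMaximalMatchingF (satGraph φ) M)
    (hconn : ∀ e ∈ connEdges φ, e ∉ M) :
    ∃ a : Fin n → Bool, ∀ j : Fin m, ∃ l ∈ φ j, a l.1 = l.2 := by
  classical
  obtain ⟨hm, hcov⟩ := (isMaximalMatchingF_iff _ _).mp hmax
  have hshare : ∀ f ∈ M, ∀ g ∈ M, ∀ v, v ∈ f → v ∈ g → f = g := by
    intro f hf g hg v hvf hvg
    by_contra hne
    exact hm.2 f hf g hg hne v hvf hvg
  refine ⟨fun i => decide (s(Sum.inl (i, 0), Sum.inl (i, 1)) ∈ M), fun j => ?_⟩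
  have hL : 2 ≤ (φ j).length ∧ (φ j).length ≤ 3 := by rcases hwf j with h | h <;> omega
  -- there is an uncovered clause vertex
  have key : ∃ (k : ℕ) (h5 : 2 * k < 5), k < (φ j).length ∧
      ∀ f ∈ M, (Sum.inr (j, ⟨2 * k, h5⟩) : SatVertex n m) ∉ f := by
    by_contra hall
    push_neg at hall
    obtain ⟨f0, hf0, hv0⟩ := hall 0 (by omega) (by omega)
    obtain ⟨t0, ht0, hlt0, hf0e, hc0⟩ :=
      inc_inr' (hm.1 _ hf0) (fun hc => hconn _ hc hf0) hv0
    have hc0' : 2 * 0 = t0 ∨ 2 * 0 = t0 + 1 := hc0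
    have ht00 : t0 = 0 := by omega
    subst ht00
    obtain ⟨f1, hf1, hv1⟩ := hall 1 (by omega) (by omega)
    obtain ⟨t1, ht1, hlt1, hf1e, hc1⟩ :=
      inc_inr' (hm.1 _ hf1) (fun hc => hconn _ hc hf1) hv1
    have hc1' : 2 * 1 = t1 ∨ 2 * 1 = t1 + 1 := hc1
    have hne1 : t1 ≠ 1 := by
      intro h
      subst h
      have h01 : f0 = f1 := by
        refine hshare f0 hf0 f1 hf1 (Sum.inr (j, ⟨1, by omega⟩)) ?_ ?_
        · rw [hf0e]; exact Sym2.mem_mk_right _ _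
        · rw [hf1e]; exact Sym2.mem_mk_left _ _
      rw [hf0e, hf1e] at h01
      exact absurd (clauseEdge_eq h01) (by omega)
    have ht12 : t1 = 2 := by omega
    subst ht12
    have hlen3 : (φ j).length = 3 := by omega
    obtain ⟨f2, hf2, hv2⟩ := hall 2 (by omega) (by omega)
    obtain ⟨t2, ht2, hlt2, hf2e, hc2⟩ :=
      inc_inr' (hm.1 _ hf2) (fun hc => hconn _ hc hf2) hv2
    have hc2' : 2 * 2 = t2 ∨ 2 * 2 = t2 + 1 := hc2
    have ht23 : t2 = 3 := by omega
    subst ht23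
    have h12 : f1 = f2 := by
      refine hshare f1 hf1 f2 hf2 (Sum.inr (j, ⟨3, by omega⟩)) ?_ ?_
      · rw [hf1e]; exact Sym2.mem_mk_right _ _
      · rw [hf2e]; exact Sym2.mem_mk_left _ _
    rw [hf1e, hf2e] at h12
    exact absurd (clauseEdge_eq h12) (by omega)
  obtain ⟨k, h5, hk, hunc⟩ := key
  cases hb : ((φ j).get ⟨k, hk⟩).2 with
  | true =>
    have he : (s(Sum.inr (j, ⟨2 * k, h5⟩),
        Sum.inl ((((φ j).get ⟨k, hk⟩).1, 0))) : Sym2 (SatVertex n m)) ∈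
        (satGraph φ).edgeSet := by
      rw [mem_edgeSet_satGraph]
      exact Or.inr ⟨j, k, h5, hk, by
        simp only [List.get_eq_getElem] at hb
        simp [hb]⟩
    obtain ⟨v, hv, f, hfM, hvf⟩ := hcov _ he
    rcases Sym2.mem_iff.mp hv with rfl | rfl
    · exact absurd hvf (hunc f hfM)
    · have hfe := inc_inl0 (hm.1 f hfM) (fun hc => hconn f hc hfM) hvf
      subst hfe
      refine ⟨(φ j).get ⟨k, hk⟩, List.get_mem _ _, ?_⟩
      rw [hb]
      simp only [decide_eq_true_eq]
      exact hfM
  | false =>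
    have he : (s(Sum.inr (j, ⟨2 * k, h5⟩),
        Sum.inl ((((φ j).get ⟨k, hk⟩).1, 2))) : Sym2 (SatVertex n m)) ∈
        (satGraph φ).edgeSet := by
      rw [mem_edgeSet_satGraph]
      exact Or.inr ⟨j, k, h5, hk, by
        simp only [List.get_eq_getElem] at hb
        simp [hb]⟩
    obtain ⟨v, hv, f, hfM, hvf⟩ := hcov _ he
    rcases Sym2.mem_iff.mp hv with rfl | rfl
    · exact absurd hvf (hunc f hfM)
    · have hfe := inc_inl2 (hm.1 f hfM) (fun hc => hconn f hc hfM) hvf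
      subst hfe
      refine ⟨(φ j).get ⟨k, hk⟩, List.get_mem _ _, ?_⟩
      rw [hb]
      simp only [decide_eq_false_iff_not]
      intro hE1
      have h12 := hshare _ hE1 _ hfM (Sum.inl ((((φ j).get ⟨k, hk⟩).1), 1))
        (Sym2.mem_mk_right _ _) (Sym2.mem_mk_left _ _)
      rw [Sym2.eq_iff] at h12
      simp only [Sum.inl.injEq, Prod.mk.injEq] at h12
      rcases h12 with ⟨⟨-, h⟩, -⟩ | ⟨⟨-, h⟩, -⟩ <;> exact absurd h (by decide)
theorem stmt12 {n m : ℕ} (φ : Fin m → List (Fin n × Bool))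
    (hwf : ∀ j : Fin m, (φ j).length = 2 ∨ (φ j).length = 3) :
    (∃ a : Fin n → Bool, ∀ j : Fin m, ∃ l ∈ φ j, a l.1 = l.2) ↔
      ∃ M : Finset (Sym2 (SatVertex n m)),
        IsMaximalMatchingF (satGraph φ) M ∧ ∀ e ∈ connEdges φ, e ∉ M := by
  constructor
  · rintro ⟨a, hsat⟩
    exact forward φ hwf a hsat
  · rintro ⟨M, hmax, hconn⟩
    exact backward φ hwf M hmax hconn
end

section
/- Let M be a maximal matching of a graph G avoiding a set O of edges (M ∩ O = ∅) in the SAT-reduction graph G'_φ. Then for each variable gadget path P_i = (x_i, x'_i, ¬x_i), M contains exactly one of the two edges {x_i, x'_i}, {x'_i, ¬x_i}. -/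
open SimpleGraph

variable {V : Type*}

private lemma stmt13_aux {n m : ℕ} (φ : Fin m → List (Fin n × Bool))
    (M : Finset (Sym2 (SatVertex n m)))
    (hsub : ∀ e ∈ M, e ∈ (satGraph φ).edgeSet)
    (hO : ∀ e ∈ connEdges φ, e ∉ M) (i : Fin n)
    (f : Sym2 (SatVertex n m)) (hf : f ∈ M)
    (hv : (Sum.inl (i,0) : SatVertex n m) ∈ f ∨ (Sum.inl (i,1) : SatVertex n m) ∈ f) :
    f = s(Sum.inl (i,0), Sum.inl (i,1)) ∨ f = s(Sum.inl (i,1), Sum.inl (i,2)) := by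
  have hef := hsub f hf
  rw [satGraph, edgeSet_fromEdgeSet] at hef
  obtain ⟨hmem, -⟩ := hef
  rcases hmem with (hv' | hc) | hconn
  · obtain ⟨i', h⟩ := hv'
    rcases h with h | h <;> subst h <;>
      simp only [Sym2.mem_iff, Sum.inl.injEq, Prod.mk.injEq] at hv
    · left
      rcases hv with (⟨h,-⟩|⟨h,-⟩)|(⟨h,-⟩|⟨h,-⟩) <;> subst h <;> rfl
    · right
      rcases hv with (⟨h,-⟩|⟨h,-⟩)|(⟨h,-⟩|⟨h,-⟩) <;> subst h <;> rfl
  · obtain ⟨j, k, hk, -, h⟩ := hc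
    subst h
    simp at hv
  · exact absurd hf (hO f hconn)

theorem stmt13 {n m : ℕ} (φ : Fin m → List (Fin n × Bool))
    (hwf : ∀ j : Fin m, (φ j).length = 2 ∨ (φ j).length = 3)
    (M : Finset (Sym2 (SatVertex n m)))
    (hM : IsMaximalMatchingF (satGraph φ) M)
    (hO : ∀ e ∈ connEdges φ, e ∉ M) :
    ∀ i : Fin n,
      Xor' (s(Sum.inl (i, 0), Sum.inl (i, 1)) ∈ M)
           (s(Sum.inl (i, 1), Sum.inl (i, 2)) ∈ M) := by
  intro i
  obtain ⟨⟨hsub, hdisj⟩, hmax⟩ := hM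
  set e1 : Sym2 (SatVertex n m) := s(Sum.inl (i, 0), Sum.inl (i, 1)) with he1
  set e2 : Sym2 (SatVertex n m) := s(Sum.inl (i, 1), Sum.inl (i, 2)) with he2
  have hne : e1 ≠ e2 := by
    intro h
    rw [he1, he2, Sym2.eq_iff] at h
    rcases h with ⟨h,-⟩|⟨h,-⟩ <;> simp only [Sum.inl.injEq, Prod.mk.injEq] at h <;>
      exact absurd h.2 (by decide)
  have hnot : ¬ (e1 ∈ M ∧ e2 ∈ M) := by
    rintro ⟨h1, h2⟩
    exact hdisj e1 h1 e2 h2 hne (Sum.inl (i, 1)) (by simp [he1]) (by simp [he2])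
  have hat : e1 ∈ M ∨ e2 ∈ M := by
    by_contra hcon
    push_neg at hcon
    obtain ⟨h1, h2⟩ := hcon
    have hE : e1 ∈ (satGraph φ).edgeSet := by
      rw [satGraph, edgeSet_fromEdgeSet]
      refine ⟨Or.inl (Or.inl ⟨i, Or.inl rfl⟩), ?_⟩
      simp [he1, Sym2.isDiag_iff_proj_eq]
    refine hmax e1 hE h1 ⟨?_, ?_⟩
    · intro e he
      rcases Finset.mem_insert.1 he with h | h
      · exact h ▸ hE
      · exact hsub e h
    · intro e he f hf hef v hve hvf
      rcases Finset.mem_insert.1 he with he' | he' <;>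
        rcases Finset.mem_insert.1 hf with hf' | hf'
      · exact hef (he'.trans hf'.symm)
      · -- e = e1, f ∈ M
        subst he'
        have hv : (Sum.inl (i,0) : SatVertex n m) ∈ f ∨ (Sum.inl (i,1) : SatVertex n m) ∈ f := by
          rw [he1, Sym2.mem_iff] at hve
          rcases hve with h | h <;> [left; right] <;> exact h ▸ hvf
        rcases stmt13_aux φ M hsub hO i f hf' hv with h | h
        · exact h1 (by rw [he1, ← h]; exact hf')
        · exact h2 (by rw [he2, ← h]; exact hf')
      · -- f = e1, e ∈ M
        subst hf'
        have hv : (Sum.inl (i,0) : SatVertex n m) ∈ e ∨ (Sum.inl (i,1) : SatVertex n m) ∈ e := by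
          rw [he1, Sym2.mem_iff] at hvf
          rcases hvf with h | h <;> [left; right] <;> exact h ▸ hve
        rcases stmt13_aux φ M hsub hO i e he' hv with h | h
        · exact h1 (by rw [he1, ← h]; exact he')
        · exact h2 (by rw [he2, ← h]; exact he')
      · exact hdisj e he' f hf' hef v hve hvf
  rcases hat with h | h
  · exact Or.inl ⟨h, fun h2 => hnot ⟨h, h2⟩⟩
  · exact Or.inr ⟨h, fun h1 => hnot ⟨h1, h⟩⟩
end

section
/- Let G be a finite simple graph and let M₁, M₂ be maximum matchings of G. Then in the solution graph 𝒢 on maximal matchings, there exists a directed path from M₁ to M₂ every node of which is a maximal matching of cardinality at least ν(G) − 1. -/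
open SimpleGraph

variable {V : Type*}

/-- `M` minus all edges sharing an endpoint with `e` (i.e. `M \ Γ(e)` for `e ∉ M`). -/
def removeAdj [Fintype V] [DecidableEq V] (M : Finset (Sym2 V)) (e : Sym2 V) :
    Finset (Sym2 V) :=
  M.filter fun f => ¬ ∃ v : V, v ∈ e ∧ v ∈ f

/-- `comp` greedily extends any matching of `G` to a maximal matching containing it. -/
def CompletionFun [DecidableEq V] (G : SimpleGraph V)
    (comp : Finset (Sym2 V) → Finset (Sym2 V)) : Prop :=
  ∀ M : Finset (Sym2 V), IsMatchingF G M → M ⊆ comp M ∧ IsMaximalMatchingF G (comp M)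

/-- The arcs of the solution graph 𝒢: from `M` to `comp((M \ Γ(e)) ∪ {e})` for `e ∉ M`. -/
def GStep [Fintype V] [DecidableEq V] (G : SimpleGraph V)
    (comp : Finset (Sym2 V) → Finset (Sym2 V)) (M M' : Finset (Sym2 V)) : Prop :=
  ∃ e ∈ G.edgeSet, e ∉ M ∧ M' = comp (insert e (removeAdj M e))

/-- `M` is a maximum (cardinality) matching of `G`. -/
def IsMaximumMatchingF (G : SimpleGraph V) (M : Finset (Sym2 V)) : Prop :=
  IsMatchingF G M ∧ ∀ N : Finset (Sym2 V), IsMatchingF G N → N.card ≤ M.card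

section Aux

variable {G : SimpleGraph V}

lemma matching_subset' {M N : Finset (Sym2 V)} (h : IsMatchingF G M) (hs : N ⊆ M) :
    IsMatchingF G N :=
  ⟨fun e he => h.1 e (hs he), fun e he f hf => h.2 e (hs he) f (hs hf)⟩

lemma maximal_of_maximum' [DecidableEq V] {M : Finset (Sym2 V)}
    (h : IsMaximumMatchingF G M) : IsMaximalMatchingF G M := by
  refine ⟨h.1, fun e _ heM hins => ?_⟩
  have := h.2 _ hins
  rw [Finset.card_insert_of_notMem heM] at this
  omega

lemma eq_of_maximal_subset' [DecidableEq V] {M N : Finset (Sym2 V)}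
    (hN : IsMaximalMatchingF G N) (hM : IsMatchingF G M) (hs : N ⊆ M) : M = N := by
  by_contra hne
  obtain ⟨f, hfM, hfN⟩ := Finset.exists_of_ssubset (hs.ssubset_of_ne (Ne.symm hne))
  exact hN.2 f (hM.1 f hfM) hfN (matching_subset' hM (Finset.insert_subset hfM hs))

lemma insert_removeAdj_matching' [Fintype V] [DecidableEq V] {M : Finset (Sym2 V)} {e : Sym2 V}
    (hM : IsMatchingF G M) (he : e ∈ G.edgeSet) :
    IsMatchingF G (insert e (removeAdj M e)) := by
  have hsub : removeAdj M e ⊆ M := Finset.filter_subset _ _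
  constructor
  · intro f hf
    rcases Finset.mem_insert.mp hf with rfl | hf
    · exact he
    · exact hM.1 f (hsub hf)
  · intro f hf g hg hfg v hvf hvg
    rcases Finset.mem_insert.mp hf with rfl | hf <;> rcases Finset.mem_insert.mp hg with rfl | hg
    · exact hfg rfl
    · exact (Finset.mem_filter.mp hg).2 ⟨v, hvf, hvg⟩
    · exact (Finset.mem_filter.mp hf).2 ⟨v, hvg, hvf⟩
    · exact hM.2 f (hsub hf) g (hsub hg) hfg v hvf hvg

lemma adjFilter_card_le_two' [Fintype V] [DecidableEq V] {M : Finset (Sym2 V)}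
    (hM : IsMatchingF G M) {e : Sym2 V} (he : ¬ e.IsDiag) :
    (M.filter fun f => ∃ v : V, v ∈ e ∧ v ∈ f).card ≤ 2 := by
  induction e using Sym2.ind with
  | _ u v =>
    have hne : u ≠ v := fun h => he (Sym2.mk_isDiag_iff.mpr h)
    have h2 : ({u, v} : Finset V).card ≤ 2 :=
      le_trans (Finset.card_insert_le _ _) (by simp)
    refine le_trans (Finset.card_le_card_of_injOn (fun f => if u ∈ f then u else v) ?_ ?_) h2
    · intro f _
      dsimp only
      split <;> simp
    · intro f hf g hg hEq
      simp only [Finset.coe_filter, Set.mem_setOf_eq] at hf hg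
      by_contra hne'
      have hfor : ∀ (a : Sym2 V), (∃ w, w ∈ s(u,v) ∧ w ∈ a) → u ∈ a ∨ v ∈ a := by
        rintro a ⟨w, hw, hwa⟩
        rcases Sym2.mem_iff.mp hw with rfl | rfl
        · exact Or.inl hwa
        · exact Or.inr hwa
      by_cases huf : u ∈ f <;> by_cases hug : u ∈ g
      · exact hM.2 f hf.1 g hg.1 hne' u huf hug
      · simp only [if_pos huf, if_neg hug] at hEq; exact hne hEq
      · simp only [if_neg huf, if_pos hug] at hEq; exact hne hEq.symm
      · have hvf : v ∈ f := (hfor f hf.2).resolve_left huf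
        have hvg : v ∈ g := (hfor g hg.2).resolve_left hug
        exact hM.2 f hf.1 g hg.1 hne' v hvf hvg

lemma memFilter_card' [Fintype V] [DecidableEq V] {e : Sym2 V} (he : ¬ e.IsDiag) :
    (Finset.univ.filter (· ∈ e)).card = 2 := by
  induction e using Sym2.ind with
  | _ u v =>
    have hne : u ≠ v := fun h => he (Sym2.mk_isDiag_iff.mpr h)
    have : (Finset.univ.filter (· ∈ s(u, v))) = {u, v} := by
      ext x
      simp [Sym2.mem_iff]
    rw [this, Finset.card_insert_of_notMem (by simp [hne]), Finset.card_singleton]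

lemma coverV_card' [Fintype V] [DecidableEq V] {F : Finset (Sym2 V)}
    (hF : IsMatchingF G F) :
    (F.biUnion fun e => Finset.univ.filter (· ∈ e)).card = 2 * F.card := by
  rw [Finset.card_biUnion]
  · rw [Finset.sum_congr rfl fun e he =>
      memFilter_card' (G.not_isDiag_of_mem_edgeSet (hF.1 e he))]
    simp [Finset.sum_const, mul_comm]
  · intro x hx y hy hxy
    rw [Function.onFun, Finset.disjoint_left]
    intro a ha hb
    simp only [Finset.mem_filter] at ha hb
    exact hF.2 x hx y hy hxy a ha.2 hb.2

lemma exists_light' [Fintype V] [DecidableEq V] {M N : Finset (Sym2 V)}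
    (hM : IsMatchingF G M) (hN : IsMatchingF G N) (hcard : M.card < N.card) :
    ∃ e ∈ N \ M, (M.filter fun f => ∃ v : V, v ∈ e ∧ v ∈ f).card ≤ 1 := by
  by_contra hcon
  push_neg at hcon
  -- every vertex of an edge of N \ M is covered by an edge of M \ N
  have hcover : ∀ e ∈ N \ M, ∀ x : V, x ∈ e → ∃ f ∈ M \ N, x ∈ f := by
    intro e he x hx
    obtain ⟨heN, heM⟩ := Finset.mem_sdiff.mp he
    obtain ⟨a, ha, b, hb, hab⟩ := Finset.one_lt_card.mp (hcon e he)
    simp only [Finset.mem_filter] at ha hb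
    obtain ⟨y, rfl⟩ := Sym2.mem_iff_exists.mp hx
    -- show x is covered by some edge of M
    have hxM : ∃ f ∈ M, x ∈ f := by
      by_contra hnx
      push_neg at hnx
      have hya : y ∈ a := by
        obtain ⟨w, hw, hwa⟩ := ha.2
        rcases Sym2.mem_iff.mp hw with rfl | rfl
        · exact absurd hwa (hnx a ha.1)
        · exact hwa
      have hyb : y ∈ b := by
        obtain ⟨w, hw, hwb⟩ := hb.2
        rcases Sym2.mem_iff.mp hw with rfl | rfl
        · exact absurd hwb (hnx b hb.1)
        · exact hwb
      exact hM.2 a ha.1 b hb.1 hab y hya hyb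
    obtain ⟨f, hfM, hxf⟩ := hxM
    refine ⟨f, Finset.mem_sdiff.mpr ⟨hfM, ?_⟩, hxf⟩
    intro hfN
    have hfe : f ≠ s(x, y) := fun h => heM (h ▸ hfM)
    exact hN.2 f hfN _ heN hfe x hxf (Sym2.mem_mk_left x y)
  have hsub : ((N \ M).biUnion fun e => Finset.univ.filter (· ∈ e)) ⊆
      ((M \ N).biUnion fun e => Finset.univ.filter (· ∈ e)) := by
    intro x hx
    obtain ⟨e, he, hxe⟩ := Finset.mem_biUnion.mp hx
    simp only [Finset.mem_filter] at hxe
    obtain ⟨f, hf, hxf⟩ := hcover e he x hxe.2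
    exact Finset.mem_biUnion.mpr ⟨f, hf, by simp [hxf]⟩
  have h1 := coverV_card' (matching_subset' hN (Finset.sdiff_subset (s := N) (t := M)))
  have h2 := coverV_card' (matching_subset' hM (Finset.sdiff_subset (s := M) (t := N)))
  have hle := Finset.card_le_card hsub
  rw [h1, h2] at hle
  have hNM : (N \ M).card ≤ (M \ N).card := by omega
  have e1 := Finset.card_inter_add_card_sdiff N M
  have e2 := Finset.card_inter_add_card_sdiff M N
  rw [Finset.inter_comm] at e1
  omega

lemma insert_removeAdj_card' [Fintype V] [DecidableEq V] (M : Finset (Sym2 V)) (e : Sym2 V)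
    (heM : e ∉ M) :
    (insert e (removeAdj M e)).card
      = M.card - (M.filter fun f => ∃ v : V, v ∈ e ∧ v ∈ f).card + 1 := by
  have hnm : e ∉ removeAdj M e := fun h => heM (Finset.filter_subset _ _ h)
  rw [Finset.card_insert_of_notMem hnm]
  have := Finset.card_filter_add_card_filter_not
    (s := M) (p := fun f => ∃ v : V, v ∈ e ∧ v ∈ f)
  have hra : (removeAdj M e).card
      = (M.filter fun f => ¬ ∃ v : V, v ∈ e ∧ v ∈ f).card := rfl
  omega

end Aux

lemma reach' [Fintype V] [DecidableEq V] (G : SimpleGraph V)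
    (comp : Finset (Sym2 V) → Finset (Sym2 V)) (hcomp : CompletionFun G comp)
    (M₁ M₂ : Finset (Sym2 V)) (h₁ : IsMaximumMatchingF G M₁) (h₂ : IsMaximumMatchingF G M₂) :
    ∀ n M, (M₂ \ M).card ≤ n → IsMaximalMatchingF G M → M₁.card - 1 ≤ M.card →
      Relation.ReflTransGen
        (fun A B => GStep G comp A B ∧ IsMaximalMatchingF G B ∧ M₁.card - 1 ≤ B.card) M M₂ := by
  intro n
  induction n with
  | zero =>
    intro M hn hMmax _
    have hsub : M₂ ⊆ M := by
      rw [← Finset.sdiff_eq_empty_iff_subset]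
      exact Finset.card_eq_zero.mp (Nat.le_zero.mp hn)
    rw [eq_of_maximal_subset' (maximal_of_maximum' h₂) hMmax.1 hsub]
  | succ n ih =>
    intro M hn hMmax hMcard
    by_cases hsub : M₂ ⊆ M
    · rw [eq_of_maximal_subset' (maximal_of_maximum' h₂) hMmax.1 hsub]
    have hne : (M₂ \ M).Nonempty := by
      rw [Finset.sdiff_nonempty]; exact hsub
    -- choose a good edge e
    have hclaim : ∃ e ∈ M₂ \ M, M₁.card - 1 ≤ (insert e (removeAdj M e)).card := by
      by_cases hbig : M₁.card ≤ M.card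
      · obtain ⟨e, he⟩ := hne
        refine ⟨e, he, ?_⟩
        have heM₂ : e ∈ M₂ := (Finset.mem_sdiff.mp he).1
        have heM : e ∉ M := (Finset.mem_sdiff.mp he).2
        have hd : (M.filter fun f => ∃ v : V, v ∈ e ∧ v ∈ f).card ≤ 2 :=
          adjFilter_card_le_two' hMmax.1
            (G.not_isDiag_of_mem_edgeSet (h₂.1.1 e heM₂))
        rw [insert_removeAdj_card' M e heM]
        omega
      · have hMM₂ : M₂.card = M₁.card :=
          le_antisymm (h₁.2 M₂ h₂.1) (h₂.2 M₁ h₁.1)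
        have hlt : M.card < M₂.card := by omega
        obtain ⟨e, he, hd⟩ := exists_light' hMmax.1 h₂.1 hlt
        refine ⟨e, he, ?_⟩
        have heM : e ∉ M := (Finset.mem_sdiff.mp he).2
        rw [insert_removeAdj_card' M e heM]
        omega
    obtain ⟨e, heMM, hNcard⟩ := hclaim
    have heM₂ : e ∈ M₂ := (Finset.mem_sdiff.mp heMM).1
    have heM : e ∉ M := (Finset.mem_sdiff.mp heMM).2
    have heE : e ∈ G.edgeSet := h₂.1.1 e heM₂
    set N := insert e (removeAdj M e) with hNdef
    have hNmatch : IsMatchingF G N := insert_removeAdj_matching' hMmax.1 heE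
    obtain ⟨hNB, hBmax⟩ := hcomp N hNmatch
    have hBcard : M₁.card - 1 ≤ (comp N).card :=
      le_trans hNcard (Finset.card_le_card hNB)
    refine Relation.ReflTransGen.head ⟨⟨e, heE, heM, rfl⟩, hBmax, hBcard⟩
      (ih (comp N) ?_ hBmax hBcard)
    have hsubd : M₂ \ comp N ⊆ (M₂ \ M).erase e := by
      intro f hf
      obtain ⟨hfM₂, hfB⟩ := Finset.mem_sdiff.mp hf
      have hfN : f ∉ N := fun h => hfB (hNB h)
      have hfe : f ≠ e := fun h => hfN (h ▸ Finset.mem_insert_self e _)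
      have hfM : f ∉ M := by
        intro hfM
        apply hfN
        refine Finset.mem_insert_of_mem (Finset.mem_filter.mpr ⟨hfM, ?_⟩)
        rintro ⟨v, hve, hvf⟩
        exact h₂.1.2 e heM₂ f hfM₂ (fun h => hfe (h ▸ rfl)) v hve hvf
      exact Finset.mem_erase.mpr ⟨hfe, Finset.mem_sdiff.mpr ⟨hfM₂, hfM⟩⟩
    have := Finset.card_le_card hsubd
    rw [Finset.card_erase_of_mem heMM] at this
    have hpos : 0 < (M₂ \ M).card := Finset.card_pos.mpr ⟨e, heMM⟩
    omega

theorem stmt15 [Fintype V] [DecidableEq V] (G : SimpleGraph V)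
    (comp : Finset (Sym2 V) → Finset (Sym2 V)) (hcomp : CompletionFun G comp)
    (M₁ M₂ : Finset (Sym2 V))
    (h₁ : IsMaximumMatchingF G M₁) (h₂ : IsMaximumMatchingF G M₂) :
    Relation.ReflTransGen
      (fun A B => GStep G comp A B ∧ IsMaximalMatchingF G B ∧ M₁.card - 1 ≤ B.card)
      M₁ M₂ := by
  exact reach' G comp hcomp M₁ M₂ h₁ h₂ (M₂ \ M₁).card M₁ le_rfl
    (maximal_of_maximum' h₁) (Nat.sub_le _ _)
end

section
/- Let M and M' be maximal matchings of a simple graph G with |M △ M'| ≤ 5 such that M = (M' \ F) ∪ {e} ∪ A where e ∈ M \ M', F = M' ∩ Γ(e), and A = M \ ((M' \ F) ∪ {e}). Then A is uniquely determined by M, e, and F, namely A = { f ∈ M \ {e} : f is adjacent to some f' ∈ F }. Consequently, the number of maximal matchings M' arising this way from a fixed M is at most |M| · (Δ choose ≤2)² = O(nΔ²), where Δ is the maximum degree. -/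
open SimpleGraph

variable {V : Type*}

open Finset

lemma chooseIneq (d : ℕ) : (2*d).choose 2 + 2*d + 1 ≤ (d.choose 2 + d + 1)^2 := by
  rcases d with _ | k
  · simp
  · have hd1 : 2 ∣ (k+1) * k := by
      have := Nat.even_mul_succ_self k
      rw [mul_comm]
      exact this.two_dvd
    have h1 : 2 * (k+1).choose 2 = (k+1) * k := by
      rw [Nat.choose_two_right, Nat.succ_sub_one, Nat.mul_div_cancel' hd1]
    have h2 : 2 * (2*(k+1)).choose 2 = (2*(k+1)) * (2*k+1) := by
      rw [Nat.choose_two_right]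
      have h3 : 2*(k+1) - 1 = 2*k+1 := by omega
      rw [h3, Nat.mul_div_cancel' (Dvd.dvd.mul_right ⟨k+1, rfl⟩ _)]
    nlinarith [Nat.zero_le ((k+1).choose 2)]

lemma pow2card {α : Type*} [DecidableEq α] (s : Finset α) (D : ℕ) (h : s.card ≤ D) :
    (s.powerset.filter (fun t => t.card ≤ 2)).card ≤ D.choose 2 + D + 1 := by
  have hsub : s.powerset.filter (fun t => t.card ≤ 2) ⊆
      s.powersetCard 2 ∪ s.powersetCard 1 ∪ s.powersetCard 0 := by
    intro t ht
    simp only [mem_filter, mem_powerset] at ht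
    simp only [mem_union, mem_powersetCard]
    have h2 : t.card = 0 ∨ t.card = 1 ∨ t.card = 2 := by omega
    tauto
  calc (s.powerset.filter (fun t => t.card ≤ 2)).card
      ≤ (s.powersetCard 2 ∪ s.powersetCard 1 ∪ s.powersetCard 0).card := card_le_card hsub
    _ ≤ (s.powersetCard 2).card + (s.powersetCard 1).card + (s.powersetCard 0).card := by
        exact le_trans (card_union_le _ _) (by gcongr; exact card_union_le _ _)
    _ ≤ D.choose 2 + D + 1 := by
        simp only [card_powersetCard]
        gcongr
        · simpa using Nat.choose_le_choose 1 h
        · simp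

lemma cardN {V : Type*} [Fintype V] [DecidableEq V] (G : SimpleGraph V) [DecidableRel G.Adj]
    (e : Sym2 V) :
    (G.edgeFinset.filter (fun f => ∃ v : V, v ∈ e ∧ v ∈ f)).card ≤ 2 * G.maxDegree := by
  induction e using Sym2.ind with | _ u v =>
  have hsub : G.edgeFinset.filter (fun f => ∃ w : V, w ∈ s(u,v) ∧ w ∈ f) ⊆
      G.incidenceFinset u ∪ G.incidenceFinset v := by
    intro f hf
    simp only [mem_filter, Sym2.mem_iff] at hf
    obtain ⟨hfe, w, hw1, hw2⟩ := hf
    rw [mem_edgeFinset] at hfe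
    rcases hw1 with rfl | rfl
    · exact mem_union_left _ (by rw [mem_incidenceFinset]; exact ⟨hfe, hw2⟩)
    · exact mem_union_right _ (by rw [mem_incidenceFinset]; exact ⟨hfe, hw2⟩)
  calc _ ≤ (G.incidenceFinset u ∪ G.incidenceFinset v).card := card_le_card hsub
    _ ≤ (G.incidenceFinset u).card + (G.incidenceFinset v).card := card_union_le _ _
    _ ≤ 2 * G.maxDegree := by
        rw [card_incidenceFinset_eq_degree, card_incidenceFinset_eq_degree, two_mul]
        gcongr <;> exact G.degree_le_maxDegree _


lemma cardF [Fintype V] [DecidableEq V] {G : SimpleGraph V} {M' : Finset (Sym2 V)}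
    (hm : IsMatchingF G M') (e : Sym2 V) :
    (M'.filter (fun f => ∃ v : V, v ∈ e ∧ v ∈ f)).card ≤ 2 := by
  induction e using Sym2.ind with | _ u v =>
  set F := M'.filter (fun f => ∃ w : V, w ∈ s(u,v) ∧ w ∈ f) with hF
  have hsplit : F ⊆ F.filter (fun f => u ∈ f) ∪ F.filter (fun f => v ∈ f) := by
    intro f hf
    have hf' := hf
    rw [hF, mem_filter] at hf'
    obtain ⟨_, w, hw1, hw2⟩ := hf'
    rw [Sym2.mem_iff] at hw1
    simp only [mem_union, mem_filter]
    rcases hw1 with rfl | rfl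
    · exact Or.inl ⟨hf, hw2⟩
    · exact Or.inr ⟨hf, hw2⟩
  have h1 : ∀ x : V, (F.filter (fun f => x ∈ f)).card ≤ 1 := by
    intro x
    apply card_le_one.mpr
    intro a ha b hb
    simp only [hF, mem_filter] at ha hb
    by_contra hne
    exact hm.2 a ha.1.1 b hb.1.1 hne x ha.2 hb.2
  calc F.card ≤ _ := card_le_card hsplit
    _ ≤ (F.filter (fun f => u ∈ f)).card + (F.filter (fun f => v ∈ f)).card := card_union_le _ _
    _ ≤ 2 := by have := h1 u; have := h1 v; omega

lemma partA [Fintype V] [DecidableEq V] {G : SimpleGraph V} {M M' F : Finset (Sym2 V)} {e : Sym2 V}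
    (hM : IsMaximalMatchingF G M) (hM' : IsMaximalMatchingF G M')
    (heM : e ∈ M) (heM' : e ∉ M')
    (hF : F = M'.filter (fun f => ∃ v : V, v ∈ e ∧ v ∈ f))
    (hsub : insert e (M' \ F) ⊆ M) :
    M \ insert e (M' \ F) =
      (M.erase e).filter (fun f => ∃ f' ∈ F, ∃ v : V, v ∈ f ∧ v ∈ f') := by
  subst hF
  set F := M'.filter (fun f => ∃ v : V, v ∈ e ∧ v ∈ f) with hF
  ext f
  constructor
  · intro hf
    obtain ⟨hfM, hfni⟩ := mem_sdiff.mp hf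
    have hfe : f ≠ e := fun h => hfni (by rw [h]; exact mem_insert_self e _)
    have hfMF : f ∉ M' \ F := fun h => hfni (mem_insert_of_mem h)
    refine mem_filter.mpr ⟨mem_erase.mpr ⟨hfe, hfM⟩, ?_⟩
    have hfM' : f ∉ M' := by
      intro h
      have hfF : f ∈ F := by
        by_contra hc
        exact hfMF (mem_sdiff.mpr ⟨h, hc⟩)
      obtain ⟨-, v, hv1, hv2⟩ := mem_filter.mp hfF
      exact hM.1.2 e heM f hfM (Ne.symm hfe) v hv1 hv2
    by_contra hnone
    push_neg at hnone
    apply hM'.2 f (hM.1.1 f hfM) hfM'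
    constructor
    · intro g hg
      rcases mem_insert.mp hg with rfl | hg'
      · exact hM.1.1 _ hfM
      · exact hM'.1.1 g hg'
    · intro a ha b hb hab v hva hvb
      rcases mem_insert.mp ha with rfl | ha' <;> rcases mem_insert.mp hb with rfl | hb'
      · exact hab rfl
      · by_cases hbF : b ∈ F
        · exact hnone b hbF v hva hvb
        · have hbM : b ∈ M := hsub (mem_insert_of_mem (mem_sdiff.mpr ⟨hb', hbF⟩))
          exact hM.1.2 a hfM b hbM hab v hva hvb
      · by_cases haF : a ∈ F
        · exact hnone a haF v hvb hva
        · have haM : a ∈ M := hsub (mem_insert_of_mem (mem_sdiff.mpr ⟨ha', haF⟩))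
          exact hM.1.2 a haM b hfM hab v hva hvb
      · exact hM'.1.2 a ha' b hb' hab v hva hvb
  · intro hf
    obtain ⟨hfE, hex⟩ := mem_filter.mp hf
    obtain ⟨hfe, hfM⟩ := mem_erase.mp hfE
    obtain ⟨f', hf'F, v, hvf, hvf'⟩ := hex
    refine mem_sdiff.mpr ⟨hfM, ?_⟩
    intro hins
    rcases mem_insert.mp hins with rfl | hmem
    · exact hfe rfl
    · obtain ⟨hfM', hfnF⟩ := mem_sdiff.mp hmem
      have hf'M' := (mem_filter.mp hf'F).1
      rcases eq_or_ne f f' with rfl | hne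
      · exact hfnF hf'F
      · exact hM'.1.2 f hfM' f' hf'M' hne v hvf hvf'

theorem stmt17 [Fintype V] [DecidableEq V] (G : SimpleGraph V) [DecidableRel G.Adj]
    (M : Finset (Sym2 V)) (hM : IsMaximalMatchingF G M) :
    (∀ (M' F : Finset (Sym2 V)) (e : Sym2 V),
        IsMaximalMatchingF G M' → (symmDiff M M').card ≤ 5 →
        e ∈ M → e ∉ M' →
        F = M'.filter (fun f => ∃ v : V, v ∈ e ∧ v ∈ f) →
        insert e (M' \ F) ⊆ M →
        M \ insert e (M' \ F) =
          (M.erase e).filter (fun f => ∃ f' ∈ F, ∃ v : V, v ∈ f ∧ v ∈ f')) ∧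
      {M' : Finset (Sym2 V) | IsMaximalMatchingF G M' ∧ (symmDiff M M').card ≤ 5 ∧
          ∃ e ∈ M, e ∉ M' ∧
            insert e (M' \ M'.filter (fun f => ∃ v : V, v ∈ e ∧ v ∈ f)) ⊆ M}.ncard ≤
        M.card * (G.maxDegree.choose 2 + G.maxDegree + 1) ^ 2 := by
  constructor
  · intro M' F e hM' _ heM heM' hF hsub
    exact partA hM hM' heM heM' hF hsub
  · set Δ := G.maxDegree with hΔ
    set recon : Sym2 V → Finset (Sym2 V) → Finset (Sym2 V) := fun e F =>
      ((M \ ((M.erase e).filter (fun f => ∃ f' ∈ F, ∃ v : V, v ∈ f ∧ v ∈ f'))).erase e) ∪ F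
      with hrecon
    set C : Finset (Finset (Sym2 V)) :=
      M.biUnion (fun e => ((G.edgeFinset.filter (fun f => ∃ v : V, v ∈ e ∧ v ∈ f)).powerset.filter
        (fun t => t.card ≤ 2)).image (recon e)) with hC
    have hsubset : {M' : Finset (Sym2 V) | IsMaximalMatchingF G M' ∧ (symmDiff M M').card ≤ 5 ∧
          ∃ e ∈ M, e ∉ M' ∧
            insert e (M' \ M'.filter (fun f => ∃ v : V, v ∈ e ∧ v ∈ f)) ⊆ M} ⊆ ↑C := by
      rintro M' ⟨hM', hcard, e, heM, heM', hsub⟩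
      rw [mem_coe, hC, mem_biUnion]
      refine ⟨e, heM, ?_⟩
      rw [mem_image]
      set F := M'.filter (fun f => ∃ v : V, v ∈ e ∧ v ∈ f) with hF
      refine ⟨F, ?_, ?_⟩
      · rw [mem_filter, mem_powerset]
        refine ⟨?_, cardF hM'.1 e⟩
        intro f hf
        obtain ⟨hfM', hex⟩ := mem_filter.mp hf
        exact mem_filter.mpr ⟨mem_edgeFinset.mpr (hM'.1.1 f hfM'), hex⟩
      · have hkey := partA hM hM' heM heM' hF hsub
        have heMF : e ∉ M' \ F := fun h => heM' (mem_sdiff.mp h).1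
        rw [hrecon]
        simp only
        rw [← hkey, sdiff_sdiff_right_self, inf_eq_inter,
          inter_eq_right.mpr hsub, erase_insert heMF,
          sdiff_union_of_subset (filter_subset _ _)]
    calc {M' : Finset (Sym2 V) | IsMaximalMatchingF G M' ∧ (symmDiff M M').card ≤ 5 ∧
          ∃ e ∈ M, e ∉ M' ∧
            insert e (M' \ M'.filter (fun f => ∃ v : V, v ∈ e ∧ v ∈ f)) ⊆ M}.ncard
        ≤ C.card := by
          rw [← Set.ncard_coe_finset]
          exact Set.ncard_le_ncard hsubset C.finite_toSet
      _ ≤ ∑ e ∈ M, (((G.edgeFinset.filter (fun f => ∃ v : V, v ∈ e ∧ v ∈ f)).powerset.filter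
            (fun t => t.card ≤ 2)).image (recon e)).card := card_biUnion_le
      _ ≤ ∑ _e ∈ M, ((2*Δ).choose 2 + 2*Δ + 1) := by
          refine sum_le_sum fun e _ => ?_
          exact le_trans card_image_le (pow2card _ _ (cardN G e))
      _ = M.card * ((2*Δ).choose 2 + 2*Δ + 1) := by rw [sum_const, smul_eq_mul]
      _ ≤ M.card * (Δ.choose 2 + Δ + 1)^2 := Nat.mul_le_mul_left _ (chooseIneq Δ)
end
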